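/- Let m, d ∈ ℕ, let θ : Fin m × Fin d × Fin d → ℝ satisfy θ_{μ,γ,β} = −θ_{μ,β,γ} for all μ, γ, β, and let c : Fin m × Fin d → ℝ satisfy Σ_{μ,α} c_{μ,α} θ_{μ,α,β} = 0 for every β. Define the quadratic vector field V : ℝ^d → ℝ^d by V_β(y) = Σ_{μ,α,γ} θ_{μ,γ,β} c_{μ,α} y_γ y_α. Then the Euclidean divergence of V vanishes identically: Σ_β (∂V_β/∂y_β)(y) = 0 for every y ∈ ℝ^d. -/

import Mathlib

open Finset

/-- If `θ_{μ,γ,β} = −θ_{μ,β,γ}` and `Σ_{μ,α} c_{μ,α} θ_{μ,α,β} = 0`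
for every `β`, then the quadratic vector field
`V_β(y) = Σ_{μ,α,γ} θ_{μ,γ,β} c_{μ,α} y_γ y_α` on `ℝ^d` has identically vanishing
Euclidean divergence. -/
theorem sphere_quadratic_field_divergence_free
    (m d : ℕ)
    (θ : Fin m → Fin d → Fin d → ℝ)
    (hθ : ∀ μ γ β, θ μ γ β = -θ μ β γ)
    (c : Fin m → Fin d → ℝ)
    (hc : ∀ β : Fin d, (∑ μ, ∑ α, c μ α * θ μ α β) = 0)
    (V : (Fin d → ℝ) → Fin d → ℝ)
    (hV : ∀ (y : Fin d → ℝ) (β : Fin d),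
      V y β = ∑ μ, ∑ α, ∑ γ, θ μ γ β * c μ α * y γ * y α) :
    ∀ y : Fin d → ℝ,
      (∑ β, fderiv ℝ (fun z => V z β) y (Pi.single β 1)) = 0 := by
  intro y
  have key : ∀ β : Fin d, HasFDerivAt (fun z => V z β)
      (∑ μ, ∑ α, ∑ γ, (θ μ γ β * c μ α) •
        ((y γ) • (ContinuousLinearMap.proj α : (Fin d → ℝ) →L[ℝ] ℝ)
          + (y α) • (ContinuousLinearMap.proj γ : (Fin d → ℝ) →L[ℝ] ℝ))) y := by
    intro β
    have hfun : (fun z => V z β)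
        = fun z => ∑ μ, ∑ α, ∑ γ, θ μ γ β * c μ α * (z γ * z α) := by
      funext z; rw [hV]; simp [mul_assoc]
    rw [hfun]
    apply HasFDerivAt.fun_sum; intro μ _
    apply HasFDerivAt.fun_sum; intro α _
    apply HasFDerivAt.fun_sum; intro γ _
    have hg : HasFDerivAt (fun z : Fin d → ℝ => z γ)
        (ContinuousLinearMap.proj γ : (Fin d → ℝ) →L[ℝ] ℝ) y :=
      (ContinuousLinearMap.proj γ : (Fin d → ℝ) →L[ℝ] ℝ).hasFDerivAt
    have ha : HasFDerivAt (fun z : Fin d → ℝ => z α)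
        (ContinuousLinearMap.proj α : (Fin d → ℝ) →L[ℝ] ℝ) y :=
      (ContinuousLinearMap.proj α : (Fin d → ℝ) →L[ℝ] ℝ).hasFDerivAt
    exact (hg.mul ha).const_mul (θ μ γ β * c μ α)
  have hd : ∀ β : Fin d, fderiv ℝ (fun z => V z β) y (Pi.single β 1)
      = ∑ μ, ∑ α, ∑ γ, (θ μ γ β * c μ α) *
        (y γ * (Pi.single β 1 : Fin d → ℝ) α + y α * (Pi.single β 1 : Fin d → ℝ) γ) := by
    intro β
    rw [(key β).fderiv]
    simp [ContinuousLinearMap.sum_apply, smul_add, mul_add]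
  simp only [hd]
  have split : ∀ β : Fin d,
      (∑ μ, ∑ α, ∑ γ, (θ μ γ β * c μ α) *
        (y γ * (Pi.single β 1 : Fin d → ℝ) α + y α * (Pi.single β 1 : Fin d → ℝ) γ))
      = (∑ μ, ∑ γ, θ μ γ β * c μ β * y γ) + (∑ μ, ∑ α, θ μ β β * c μ α * y α) := by
    intro β
    simp only [mul_add, Finset.sum_add_distrib]
    congr 1
    · refine Finset.sum_congr rfl fun μ _ => ?_
      rw [Finset.sum_comm]
      refine Finset.sum_congr rfl fun γ _ => ?_
      rw [Finset.sum_eq_single β]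
      · simp [mul_comm, mul_assoc, mul_left_comm]
      · intro b _ hb; simp [Pi.single_apply, hb]
      · simp
    · refine Finset.sum_congr rfl fun μ _ => ?_
      refine Finset.sum_congr rfl fun α _ => ?_
      rw [Finset.sum_eq_single β]
      · simp [mul_comm, mul_assoc, mul_left_comm]
      · intro b _ hb; simp [Pi.single_apply, hb]
      · simp
  simp only [split, Finset.sum_add_distrib]
  have hzero : ∀ μ β, θ μ β β = 0 := by
    intro μ β; have := hθ μ β β; linarith
  have h2 : (∑ β : Fin d, ∑ μ, ∑ α, θ μ β β * c μ α * y α) = 0 := by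
    simp [hzero]
  rw [h2, add_zero]
  calc (∑ β : Fin d, ∑ μ, ∑ γ, θ μ γ β * c μ β * y γ)
      = ∑ β : Fin d, ∑ μ, ∑ γ, -(c μ β * θ μ β γ * y γ) := by
        refine Finset.sum_congr rfl fun β _ => Finset.sum_congr rfl fun μ _ =>
          Finset.sum_congr rfl fun γ _ => ?_
        rw [hθ]; ring
    _ = -∑ γ : Fin d, (∑ μ, ∑ β, c μ β * θ μ β γ) * y γ := by
        simp only [Finset.sum_neg_distrib, neg_inj]
        have : (∑ γ : Fin d, (∑ μ, ∑ β, c μ β * θ μ β γ) * y γ)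
            = ∑ γ : Fin d, ∑ μ, ∑ β, c μ β * θ μ β γ * y γ := by
          refine Finset.sum_congr rfl fun γ _ => ?_
          rw [Finset.sum_mul]
          exact Finset.sum_congr rfl fun μ _ => Finset.sum_mul _ _ _
        rw [this]
        exact Finset.sum_comm.trans
          ((Finset.sum_congr rfl fun μ _ => Finset.sum_comm).trans Finset.sum_comm)
    _ = 0 := by simp [hc]
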